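/- For every k ≥ 1, the two-variable exponential generating function of the numbers t(n,k,r) satisfies, as an identity of formal power series in ℚ[[x,y]]: ∑_{n,r≥0} t(n,k,r) (x^n/n!) y^r = log^{(k)}(x,y) = (log^{(k)}(x))^y := exp(y·log(log^{(k)}(x))). -/

import Mathlib

open Finset

/-- Stirling numbers of the second kind: the number of partitions (equivalence
relations) of an `n`-element set into `r` nonempty blocks. -/
noncomputable def stirS2 (n r : ℕ) : ℕ :=
  Nat.card {p : Setoid (Fin n) // Nat.card (Quotient p) = r}

/-- Signed Stirling numbers of the first kind, defined by
`x(x-1)⋯(x-n+1) = ∑_{r=0}^{n} s(n,r) xʳ`. -/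
noncomputable def stirS1 (n r : ℕ) : ℤ :=
  (∏ i ∈ Finset.range n, (Polynomial.X - Polynomial.C (i : ℤ))).coeff r

/-- `Tnum n k r = T(n,k,r) = ∑_{n ≥ i_1 ≥ … ≥ i_{k-1} ≥ r} ∏_{j=1}^{k} S(i_{j-1}, i_j)`
(with `i_0 = n`, `i_k = r`), written via the equivalent recursion on `k`. -/
noncomputable def Tnum : ℕ → ℕ → ℕ → ℕ
  | n, 0, r => if n = r then 1 else 0
  | n, k + 1, r => ∑ m ∈ Finset.Icc r n, stirS2 n m * Tnum m k r

/-- `tnum n k r = t(n,k,r) = ∑_{n ≥ i_1 ≥ … ≥ i_{k-1} ≥ r} ∏_{j=1}^{k} s(i_{j-1}, i_j)`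
(with `i_0 = n`, `i_k = r`), written via the equivalent recursion on `k`. -/
noncomputable def tnum : ℕ → ℕ → ℕ → ℤ
  | n, 0, r => if n = r then 1 else 0
  | n, k + 1, r => ∑ m ∈ Finset.Icc r n, stirS1 n m * tnum m k r

/-- Composition `f(g(x))` of formal power series, for `g` with zero constant
term (so that `coeff d (g^m) = 0` for `m > d` and the sum below is the full
composition). -/
noncomputable def comp1 (f g : PowerSeries ℚ) : PowerSeries ℚ :=
  PowerSeries.mk fun d => ∑ m ∈ Finset.range (d + 1),
    PowerSeries.coeff m f * PowerSeries.coeff d (g ^ m)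

/-- Composition `f(g(x,y))` of a one-variable power series with a two-variable
power series `g` with zero constant term. -/
noncomputable def comp2 (f : PowerSeries ℚ) (g : MvPowerSeries (Fin 2) ℚ) :
    MvPowerSeries (Fin 2) ℚ :=
  fun e => ∑ m ∈ Finset.range (e 0 + e 1 + 1),
    PowerSeries.coeff m f * MvPowerSeries.coeff e (g ^ m)

/-- The embedding `ℚ[[x]] → ℚ[[x,y]]`, `x ↦ x` (the variable `0`). -/
noncomputable def toX (f : PowerSeries ℚ) : MvPowerSeries (Fin 2) ℚ :=
  fun e => if e 1 = 0 then PowerSeries.coeff (e 0) f else 0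

/-- The Maclaurin series of `log(1+u) = ∑_{m ≥ 1} (-1)^{m+1} uᵐ/m`. -/
noncomputable def logOnePlus : PowerSeries ℚ :=
  PowerSeries.mk fun m => if m = 0 then 0 else (-1 : ℚ) ^ (m + 1) / m

/-- The formal logarithm of a power series `f` with constant term `1`:
`log f = log(1 + (f - 1))`. -/
noncomputable def logOf (f : PowerSeries ℚ) : PowerSeries ℚ :=
  comp1 logOnePlus (f - 1)

/-- `log⁽⁰⁾(x) = eˣ` and `log⁽ᵏ⁾(x) = 1 + log(log⁽ᵏ⁻¹⁾(x))`. -/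
noncomputable def logIter : ℕ → PowerSeries ℚ
  | 0 => PowerSeries.exp ℚ
  | k + 1 => 1 + logOf (logIter k)

/-- `log⁽ᵏ⁾(x,y) = (log⁽ᵏ⁾(x))ʸ := exp(y ⬝ log(log⁽ᵏ⁾(x)))` in `ℚ[[x,y]]`. -/
noncomputable def logXY (k : ℕ) : MvPowerSeries (Fin 2) ℚ :=
  comp2 (PowerSeries.exp ℚ) (MvPowerSeries.X 1 * toX (logOf (logIter k)))

/-- The series `∑_{n,r ≥ 0} t(n,k,r) (xⁿ/n!) yʳ ∈ ℚ[[x,y]]`. -/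
noncomputable def tgen (k : ℕ) : MvPowerSeries (Fin 2) ℚ :=
  fun e => (tnum (e 0) k (e 1) : ℚ) / (e 0).factorial

section Aux
open PowerSeries

lemma coeff_comp1 (f g : PowerSeries ℚ) (d : ℕ) :
    coeff d (comp1 f g) = ∑ m ∈ Finset.range (d + 1),
      coeff m f * coeff d (g ^ m) := by
  simp [comp1]

lemma coeff_pow_zero {g : PowerSeries ℚ} (hg : constantCoeff g = 0) :
    ∀ m d, d < m → coeff d (g ^ m) = 0 := by
  intro m
  induction m with
  | zero => intro d h; omega
  | succ m ih =>
    intro d h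
    rw [pow_succ, mul_comm, PowerSeries.coeff_mul]
    apply Finset.sum_eq_zero
    rintro ⟨a, b⟩ hab
    rw [Finset.HasAntidiagonal.mem_antidiagonal] at hab
    rcases Nat.eq_zero_or_pos a with ha | ha
    · subst ha
      rw [coeff_zero_eq_constantCoeff, hg, zero_mul]
    · have : b < m := by omega
      rw [ih b this, mul_zero]

lemma coeff_comp1_ext {g : PowerSeries ℚ} (hg : constantCoeff g = 0)
    (f : PowerSeries ℚ) {d N : ℕ} (h : d ≤ N) :
    coeff d (comp1 f g) = ∑ m ∈ Finset.range (N + 1),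
      coeff m f * coeff d (g ^ m) := by
  rw [coeff_comp1]
  apply Finset.sum_subset
  · exact Finset.range_subset_range.2 (by omega)
  · intro m hm hm'
    rw [Finset.mem_range] at hm hm'
    rw [coeff_pow_zero hg m d (by omega), mul_zero]

lemma comp1_one (g : PowerSeries ℚ) : comp1 1 g = 1 := by
  ext d
  rw [coeff_comp1]
  rw [Finset.sum_eq_single 0]
  · simp
  · intro m _ hm
    simp [PowerSeries.coeff_one, hm]
  · simp

lemma constantCoeff_comp1 (f g : PowerSeries ℚ) :
    constantCoeff (comp1 f g) = constantCoeff f := by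
  have h1 := coeff_comp1 f g 0
  simpa using h1

lemma comp1_add (f h g : PowerSeries ℚ) :
    comp1 (f + h) g = comp1 f g + comp1 h g := by
  ext d
  simp [coeff_comp1, add_mul, Finset.sum_add_distrib]

lemma comp1_X_right (f : PowerSeries ℚ) : comp1 f X = f := by
  ext d
  rw [coeff_comp1]
  rw [Finset.sum_eq_single d]
  · simp [PowerSeries.coeff_X_pow]
  · intro m _ hm
    rw [PowerSeries.coeff_X_pow, if_neg (by omega), mul_zero]
  · intro h; exact absurd (Finset.self_mem_range_succ d) h

lemma comp1_X_left {g : PowerSeries ℚ} (hg : constantCoeff g = 0) :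
    comp1 X g = g := by
  ext d
  rw [coeff_comp1_ext hg X (Nat.le_succ d)]
  rw [Finset.sum_eq_single 1]
  · simp
  · intro m _ hm
    rw [PowerSeries.coeff_X, if_neg hm, zero_mul]
  · intro h
    exact absurd (Finset.mem_range.2 (by omega)) h

lemma comp1_mul {g : PowerSeries ℚ} (hg : constantCoeff g = 0) (f h : PowerSeries ℚ) :
    comp1 (f * h) g = comp1 f g * comp1 h g := by
  ext d
  set T : ℕ × ℕ → ℚ := fun p => coeff p.1 f * coeff p.2 h * coeff d (g ^ (p.1 + p.2))
    with hT
  have hTz : ∀ p : ℕ × ℕ, d < p.1 + p.2 → T p = 0 := by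
    intro p hp
    simp only [hT, coeff_pow_zero hg _ d hp, mul_zero]
  have RHSeq : coeff d (comp1 f g * comp1 h g)
      = ∑ p ∈ Finset.range (d+1) ×ˢ Finset.range (d+1), T p := by
    rw [PowerSeries.coeff_mul]
    have step : ∀ p ∈ antidiagonal d,
        coeff p.1 (comp1 f g) * coeff p.2 (comp1 h g)
        = ∑ a ∈ Finset.range (d+1), ∑ b ∈ Finset.range (d+1),
            (coeff a f * coeff p.1 (g^a)) * (coeff b h * coeff p.2 (g^b)) := by
      intro p hp
      rw [Finset.HasAntidiagonal.mem_antidiagonal] at hp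
      rw [coeff_comp1_ext hg f (N := d) (by omega), coeff_comp1_ext hg h (N := d) (by omega),
        Finset.sum_mul_sum]
    rw [Finset.sum_congr rfl step, Finset.sum_comm, Finset.sum_product]
    refine Finset.sum_congr rfl fun a _ => ?_
    rw [Finset.sum_comm]
    refine Finset.sum_congr rfl fun b _ => ?_
    simp only [hT, pow_add, PowerSeries.coeff_mul, Finset.mul_sum]
    refine Finset.sum_congr rfl fun p _ => by ring
  have hdisj : Set.PairwiseDisjoint ↑(Finset.range (2*d+2))
      (fun m : ℕ => antidiagonal m) := by
    intro m1 _ m2 _ hne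
    refine Finset.disjoint_left.2 fun p hp1 hp2 => hne ?_
    rw [Finset.HasAntidiagonal.mem_antidiagonal] at hp1 hp2
    omega
  have LHSeq : coeff d (comp1 (f*h) g)
      = ∑ p ∈ (Finset.range (2*d+2)).biUnion (fun m => antidiagonal m), T p := by
    rw [coeff_comp1_ext hg (f*h) (N := 2*d+1) (by omega), Finset.sum_biUnion hdisj]
    have : 2*d+1+1 = 2*d+2 := by omega
    rw [this]
    refine Finset.sum_congr rfl fun m _ => ?_
    rw [PowerSeries.coeff_mul, Finset.sum_mul]
    refine Finset.sum_congr rfl fun p hp => ?_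
    rw [Finset.HasAntidiagonal.mem_antidiagonal] at hp
    simp only [hT, hp]
  rw [LHSeq, RHSeq]
  have e1 : ∑ p ∈ (Finset.range (2*d+2)).biUnion (fun m => antidiagonal m), T p
      = ∑ p ∈ Finset.range (2*d+2) ×ˢ Finset.range (2*d+2), T p := by
    apply Finset.sum_subset
    · intro p hp
      simp only [Finset.mem_biUnion] at hp
      obtain ⟨m, hm, hpm⟩ := hp
      rw [Finset.HasAntidiagonal.mem_antidiagonal] at hpm
      rw [Finset.mem_range] at hm
      refine Finset.mem_product.2 ⟨Finset.mem_range.2 (by omega), Finset.mem_range.2 (by omega)⟩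
    · intro p hp hp'
      apply hTz
      by_contra hle
      push_neg at hle
      apply hp'
      refine Finset.mem_biUnion.2 ⟨p.1 + p.2, Finset.mem_range.2 ?_, Finset.HasAntidiagonal.mem_antidiagonal.2 rfl⟩
      omega
  have e2 : ∑ p ∈ Finset.range (d+1) ×ˢ Finset.range (d+1), T p
      = ∑ p ∈ Finset.range (2*d+2) ×ˢ Finset.range (2*d+2), T p := by
    apply Finset.sum_subset
    · intro p hp
      rw [Finset.mem_product, Finset.mem_range, Finset.mem_range] at hp
      refine Finset.mem_product.2 ⟨Finset.mem_range.2 (by omega), Finset.mem_range.2 (by omega)⟩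
    · intro p hp hp'
      apply hTz
      rw [Finset.mem_product, Finset.mem_range, Finset.mem_range] at hp hp'
      omega
  rw [e1, e2]

lemma comp1_pow {h : PowerSeries ℚ} (hh : constantCoeff h = 0) (g : PowerSeries ℚ) :
    ∀ j : ℕ, comp1 (g ^ j) h = (comp1 g h) ^ j := by
  intro j
  induction j with
  | zero => simpa using comp1_one h
  | succ j ih => rw [pow_succ, comp1_mul hh, ih, pow_succ]

lemma comp1_assoc {g h : PowerSeries ℚ} (hg : constantCoeff g = 0)
    (hh : constantCoeff h = 0) (f : PowerSeries ℚ) :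
    comp1 (comp1 f g) h = comp1 f (comp1 g h) := by
  ext d
  rw [coeff_comp1, coeff_comp1]
  have step : ∀ m ∈ Finset.range (d+1),
      coeff m (comp1 f g) * coeff d (h ^ m)
      = ∑ j ∈ Finset.range (d+1), coeff j f * (coeff m (g^j) * coeff d (h^m)) := by
    intro m hm
    rw [Finset.mem_range] at hm
    rw [coeff_comp1_ext hg f (N := d) (by omega), Finset.sum_mul]
    refine Finset.sum_congr rfl fun j _ => by ring
  rw [Finset.sum_congr rfl step, Finset.sum_comm]
  refine Finset.sum_congr rfl fun j _ => ?_
  rw [← Finset.mul_sum]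
  congr 1
  rw [← comp1_pow hh, coeff_comp1]

-- derivative facts
lemma deriv_logOnePlus : d⁄dX ℚ logOnePlus = PowerSeries.mk fun m => (-1 : ℚ) ^ m := by
  ext n
  rw [PowerSeries.coeff_derivative]
  simp only [logOnePlus, PowerSeries.coeff_mk]
  rw [if_neg (Nat.succ_ne_zero n)]
  have hn : ((n : ℚ) + 1) ≠ 0 := by positivity
  push_cast
  field_simp
  ring

lemma onePlusX_mul_deriv : (1 + X) * d⁄dX ℚ logOnePlus = 1 := by
  rw [deriv_logOnePlus]
  ext n
  rw [add_mul, one_mul, map_add, PowerSeries.coeff_one]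
  cases n with
  | zero => simp
  | succ n =>
    rw [PowerSeries.coeff_succ_X_mul]
    simp [pow_succ]

lemma constantCoeff_logOnePlus : constantCoeff logOnePlus = 0 := by
  have := PowerSeries.coeff_mk 0 (fun m => if m = 0 then (0:ℚ) else (-1 : ℚ) ^ (m + 1) / m)
  simpa [logOnePlus] using this

-- chain rule
lemma deriv_comp1 {g : PowerSeries ℚ} (hg : constantCoeff g = 0) (f : PowerSeries ℚ) :
    d⁄dX ℚ (comp1 f g) = comp1 (d⁄dX ℚ f) g * d⁄dX ℚ g := by
  ext d
  rw [PowerSeries.coeff_derivative, coeff_comp1]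
  have hpow : ∀ j : ℕ, coeff d (d⁄dX ℚ (g ^ (j+1)))
      = ((j:ℚ)+1) * coeff d (g ^ j * d⁄dX ℚ g) := by
    intro j
    have : d⁄dX ℚ (g ^ (j+1)) = (j+1) • (g ^ j * d⁄dX ℚ g) := by
      rw [Derivation.leibniz_pow]
      simp [smul_smul, smul_eq_mul, mul_comm]
    rw [this, map_nsmul, nsmul_eq_mul]
    norm_cast
  have LHS : (∑ m ∈ Finset.range (d+1+1), coeff m f * coeff (d+1) (g^m)) * ((d:ℚ)+1)
      = ∑ j ∈ Finset.range (d+1), ((j:ℚ)+1) * coeff (j+1) f * coeff d (g^j * d⁄dX ℚ g) := by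
    rw [Finset.sum_mul, Finset.sum_range_succ']
    have h0 : coeff 0 f * coeff (d+1) (g^0) * ((d:ℚ)+1) = 0 := by
      simp [PowerSeries.coeff_one]
    rw [h0, add_zero]
    refine Finset.sum_congr rfl fun j hj => ?_
    have hd := PowerSeries.coeff_derivative (g^(j+1)) d
    have h2 : coeff (d+1) (g^(j+1)) * ((d:ℚ)+1) = ((j:ℚ)+1) * coeff d (g^j * d⁄dX ℚ g) := by
      rw [← hd, hpow j]
    linear_combination coeff (j+1) f * h2
  rw [LHS, PowerSeries.coeff_mul]
  have step : ∀ p ∈ antidiagonal d,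
      coeff p.1 (comp1 (d⁄dX ℚ f) g) * coeff p.2 (d⁄dX ℚ g)
      = ∑ j ∈ Finset.range (d+1),
          ((j:ℚ)+1) * coeff (j+1) f * (coeff p.1 (g^j) * coeff p.2 (d⁄dX ℚ g)) := by
    intro p hp
    rw [Finset.HasAntidiagonal.mem_antidiagonal] at hp
    rw [coeff_comp1_ext hg _ (N := d) (by omega), Finset.sum_mul]
    refine Finset.sum_congr rfl fun j _ => ?_
    rw [PowerSeries.coeff_derivative]
    push_cast
    ring
  rw [Finset.sum_congr rfl step, Finset.sum_comm]
  refine Finset.sum_congr rfl fun j _ => ?_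
  rw [← Finset.mul_sum, ← PowerSeries.coeff_mul]

lemma psDerivExp : d⁄dX ℚ (PowerSeries.exp ℚ) = PowerSeries.exp ℚ := by
  ext n
  rw [PowerSeries.coeff_derivative, PowerSeries.coeff_exp, PowerSeries.coeff_exp]
  have h1 : (Nat.factorial (n+1) : ℚ) ≠ 0 := by positivity
  have h2 : (Nat.factorial n : ℚ) ≠ 0 := by positivity
  simp only [eq_ratCast, Rat.cast_div, Rat.cast_one, Rat.cast_natCast]
  rw [Nat.factorial_succ]
  push_cast
  field_simp

lemma logOf_exp_eq_X : comp1 logOnePlus (PowerSeries.exp ℚ - 1) = X := by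
  have hE : constantCoeff (PowerSeries.exp ℚ - 1) = 0 := by
    simp [PowerSeries.constantCoeff_exp]
  apply PowerSeries.derivative.ext
  · rw [deriv_comp1 hE, PowerSeries.derivative_X]
    have hDE : d⁄dX ℚ (PowerSeries.exp ℚ - 1) = PowerSeries.exp ℚ := by
      rw [map_sub, psDerivExp]
      simp
    have h1 : comp1 (1 + X) (PowerSeries.exp ℚ - 1) = PowerSeries.exp ℚ := by
      rw [comp1_add, comp1_one, comp1_X_left hE]
      ring
    rw [hDE]
    calc comp1 (d⁄dX ℚ logOnePlus) (PowerSeries.exp ℚ - 1) * PowerSeries.exp ℚ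
        = comp1 ((d⁄dX ℚ logOnePlus) * (1+X)) (PowerSeries.exp ℚ - 1) := by
          rw [comp1_mul hE, h1]
      _ = 1 := by rw [mul_comm, onePlusX_mul_deriv, comp1_one]
  · rw [constantCoeff_comp1, constantCoeff_logOnePlus, PowerSeries.constantCoeff_X]

-- Stirling numbers of the first kind
lemma stirS1_zero_left (r : ℕ) : stirS1 0 r = if r = 0 then 1 else 0 := by
  simp [stirS1, Polynomial.coeff_one]

lemma stirS1_zero_right (n : ℕ) : stirS1 (n+1) 0 = 0 := by
  unfold stirS1
  rw [Polynomial.coeff_zero_eq_eval_zero, Polynomial.eval_prod]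
  apply Finset.prod_eq_zero (Finset.mem_range.2 (Nat.succ_pos n))
  simp

lemma stirS1_eq_zero_of_lt {n r : ℕ} (h : n < r) : stirS1 n r = 0 := by
  unfold stirS1
  apply Polynomial.coeff_eq_zero_of_natDegree_lt
  have hdeg : (∏ i ∈ Finset.range n, (Polynomial.X - Polynomial.C (i : ℤ))).natDegree = n := by
    rw [Polynomial.natDegree_prod]
    · simp only [Polynomial.natDegree_X_sub_C]
      simp
    · intro i _
      exact Polynomial.X_sub_C_ne_zero _
  omega

lemma stirS1_succ (n r : ℕ) : stirS1 (n+1) (r+1) = stirS1 n r - n * stirS1 n (r+1) := by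
  unfold stirS1
  rw [Finset.prod_range_succ, mul_sub, Polynomial.coeff_sub, Polynomial.coeff_mul_X,
    Polynomial.coeff_mul_C]
  ring

-- EGF of Stirling numbers of the first kind
lemma coeff_logOnePlus_pow : ∀ n r : ℕ, coeff n (logOnePlus ^ r)
    = (Nat.factorial r : ℚ) * (stirS1 n r : ℚ) / (Nat.factorial n : ℚ) := by
  intro n
  induction n with
  | zero =>
    intro r
    rw [coeff_zero_eq_constantCoeff, map_pow, constantCoeff_logOnePlus]
    cases r with
    | zero => simp [stirS1_zero_left]
    | succ r => simp [stirS1_zero_left]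
  | succ n ih =>
    intro r
    cases r with
    | zero =>
      rw [pow_zero, PowerSeries.coeff_one, if_neg (Nat.succ_ne_zero n), stirS1_zero_right]
      simp
    | succ r =>
      have key : (1 + X) * d⁄dX ℚ (logOnePlus ^ (r+1)) = ((r:ℚ)+1) • (logOnePlus ^ r) := by
        have hp : d⁄dX ℚ (logOnePlus ^ (r+1))
            = (r+1) • (logOnePlus ^ r * d⁄dX ℚ logOnePlus) := by
          rw [Derivation.leibniz_pow]
          simp [smul_smul, smul_eq_mul, mul_comm]
        rw [hp, mul_smul_comm]
        have : (1 + X) * (logOnePlus ^ r * d⁄dX ℚ logOnePlus)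
            = logOnePlus ^ r * ((1 + X) * d⁄dX ℚ logOnePlus) := by ring
        rw [this, onePlusX_mul_deriv, mul_one]
        push_cast
        rw [← Nat.cast_smul_eq_nsmul ℚ]
        push_cast
        ring_nf
      have hc := congrArg (coeff n) key
      have hXD : coeff n (X * d⁄dX ℚ (logOnePlus ^ (r+1)))
          = (n:ℚ) * coeff n (logOnePlus ^ (r+1)) := by
        cases n with
        | zero =>
          rw [coeff_zero_eq_constantCoeff, map_mul, PowerSeries.constantCoeff_X]
          simp
        | succ m =>
          rw [PowerSeries.coeff_succ_X_mul, PowerSeries.coeff_derivative]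
          push_cast
          ring
      rw [map_smul, smul_eq_mul, add_mul, one_mul, map_add, hXD,
        PowerSeries.coeff_derivative, ih (r+1), ih r] at hc
      rw [stirS1_succ n r]
      have hfn : (Nat.factorial n : ℚ) ≠ 0 := by positivity
      have hfn1 : (Nat.factorial (n+1) : ℚ) ≠ 0 := by positivity
      rw [Nat.factorial_succ (n := r)] at hc
      rw [Nat.factorial_succ (n := n), Nat.factorial_succ (n := r)]
      push_cast at hc ⊢
      field_simp at hc ⊢
      linear_combination hc

-- iterated log lemmas
lemma Lk_zero : _root_.logOf (logIter 0) = X := logOf_exp_eq_X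

lemma Lk_succ (k : ℕ) : _root_.logOf (logIter (k+1)) = comp1 logOnePlus (_root_.logOf (logIter k)) := by
  show comp1 logOnePlus (logIter (k+1) - 1) = _
  have h : logIter (k+1) - 1 = _root_.logOf (logIter k) := by
    show 1 + _root_.logOf (logIter k) - 1 = _
    ring
  rw [h]

lemma constantCoeff_Lk (k : ℕ) : constantCoeff (_root_.logOf (logIter k)) = 0 := by
  unfold _root_.logOf
  rw [constantCoeff_comp1, constantCoeff_logOnePlus]

lemma Lk_comm (k : ℕ) : comp1 (_root_.logOf (logIter k)) logOnePlus
    = comp1 logOnePlus (_root_.logOf (logIter k)) := by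
  induction k with
  | zero => rw [Lk_zero, comp1_X_left constantCoeff_logOnePlus, comp1_X_right]
  | succ k ih =>
    rw [Lk_succ, comp1_assoc (constantCoeff_Lk k) constantCoeff_logOnePlus logOnePlus, ih]

lemma tnum_eq_zero_of_lt {k n r : ℕ} (h : n < r) : tnum n k r = 0 := by
  cases k with
  | zero => simp only [tnum]; rw [if_neg (by omega)]
  | succ k =>
    simp only [tnum]
    rw [Finset.Icc_eq_empty (by omega), Finset.sum_empty]

lemma main_coeff : ∀ k r n : ℕ, coeff n ((_root_.logOf (logIter k)) ^ r)
    = (Nat.factorial r : ℚ) * (tnum n k r : ℚ) / (Nat.factorial n : ℚ) := by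
  intro k
  induction k with
  | zero =>
    intro r n
    rw [Lk_zero, PowerSeries.coeff_X_pow]
    simp only [tnum]
    by_cases h : n = r
    · subst h
      rw [if_pos rfl, if_pos rfl]
      have : (Nat.factorial n : ℚ) ≠ 0 := by positivity
      field_simp
      norm_num
    · rw [if_neg h, if_neg h]
      simp
  | succ k ih =>
    intro r n
    have h1 : (_root_.logOf (logIter (k+1)))^r = comp1 ((_root_.logOf (logIter k))^r) logOnePlus := by
      rw [Lk_succ, ← Lk_comm, ← comp1_pow constantCoeff_logOnePlus]
    rw [h1, coeff_comp1]
    have hfn : (Nat.factorial n : ℚ) ≠ 0 := by positivity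
    have step : ∀ m ∈ Finset.range (n+1),
        coeff m ((_root_.logOf (logIter k))^r) * coeff n (logOnePlus ^ m)
        = (Nat.factorial r : ℚ)/(Nat.factorial n : ℚ)
            * ((stirS1 n m : ℚ) * (tnum m k r : ℚ)) := by
      intro m hm
      rw [ih r m, coeff_logOnePlus_pow n m]
      have hfm : (Nat.factorial m : ℚ) ≠ 0 := by positivity
      field_simp
    rw [Finset.sum_congr rfl step, ← Finset.mul_sum]
    have hsum : ∑ m ∈ Finset.range (n+1), (stirS1 n m : ℚ) * (tnum m k r : ℚ)
        = ((tnum n (k+1) r : ℤ) : ℚ) := by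
      have h2 : tnum n (k+1) r = ∑ m ∈ Finset.Icc r n, stirS1 n m * tnum m k r := by
        simp only [tnum]
      rw [h2]
      push_cast
      rw [eq_comm]
      apply Finset.sum_subset
      · intro m hm
        rw [Finset.mem_Icc] at hm
        exact Finset.mem_range.2 (by omega)
      · intro m hm hm'
        rw [Finset.mem_range] at hm
        rw [Finset.mem_Icc] at hm'
        have : m < r := by omega
        rw [tnum_eq_zero_of_lt this]
        push_cast
        ring
    rw [hsum]
    ring

-- toX lemmas
lemma toX_apply_single (f : PowerSeries ℚ) (a : ℕ) :
    toX f (Finsupp.single (0 : Fin 2) a) = coeff a f := by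
  simp [toX, Finsupp.single_apply]

lemma toX_one : toX 1 = 1 := by
  apply MvPowerSeries.ext
  intro e
  rw [MvPowerSeries.coeff_one]
  show toX 1 e = _
  simp only [toX]
  by_cases he : e 1 = 0
  · rw [if_pos he, PowerSeries.coeff_one]
    by_cases h0 : e 0 = 0
    · rw [if_pos h0, if_pos]
      ext i
      fin_cases i
      · exact h0
      · exact he
    · rw [if_neg h0, if_neg]
      intro h
      apply h0
      rw [h]
      rfl
  · rw [if_neg he, if_neg]
    intro h
    apply he
    rw [h]
    rfl

lemma toX_mul (f g : PowerSeries ℚ) : toX (f * g) = toX f * toX g := by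
  apply MvPowerSeries.ext
  intro e
  rw [MvPowerSeries.coeff_mul]
  show toX (f * g) e = _
  by_cases he : e 1 = 0
  · have he0 : e = Finsupp.single (0 : Fin 2) (e 0) := by
      ext i
      fin_cases i
      · simp
      · simpa using he
    rw [he0]
    rw [toX_apply_single, PowerSeries.coeff_mul, Finsupp.antidiagonal_single, Finset.sum_map]
    refine Finset.sum_congr rfl fun p _ => ?_
    show _ = toX f _ * toX g _
    rw [Function.Embedding.prodMap]
    simp only [Function.Embedding.coeFn_mk, Prod.map_apply, Prod.map_fst, Prod.map_snd]
    rw [toX_apply_single, toX_apply_single]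
  · simp only [toX]
    rw [if_neg he, eq_comm]
    apply Finset.sum_eq_zero
    rintro ⟨p, q⟩ hpq
    rw [Finset.HasAntidiagonal.mem_antidiagonal] at hpq
    have : p 1 + q 1 = e 1 := by rw [← hpq, Finsupp.add_apply]
    by_cases hp : p 1 = 0
    · have hq : q 1 ≠ 0 := by omega
      show toX f p * toX g q = 0
      simp only [toX]
      rw [if_neg hq, mul_zero]
    · show toX f p * toX g q = 0
      simp only [toX]
      rw [if_neg hp, zero_mul]

lemma toX_pow (g : PowerSeries ℚ) : ∀ m : ℕ, toX (g ^ m) = (toX g) ^ m := by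
  intro m
  induction m with
  | zero => simpa using toX_one
  | succ m ih => rw [pow_succ, toX_mul, ih, pow_succ]

lemma coeff_X1_pow_mul (h : PowerSeries ℚ) (m : ℕ) (e : Fin 2 →₀ ℕ) :
    MvPowerSeries.coeff e ((MvPowerSeries.X (1 : Fin 2) ^ m : MvPowerSeries (Fin 2) ℚ) * toX h)
      = if e 1 = m then PowerSeries.coeff (e 0) h else 0 := by
  rw [MvPowerSeries.X_pow_eq, MvPowerSeries.coeff_monomial_mul]
  by_cases hle : Finsupp.single (1 : Fin 2) m ≤ e
  · rw [if_pos hle]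
    have h1 : m ≤ e 1 := Finsupp.single_le_iff.1 hle
    by_cases heq : e 1 = m
    · rw [if_pos heq, one_mul]
      have h2 : (e - Finsupp.single (1 : Fin 2) m) 1 = 0 := by
        rw [Finsupp.tsub_apply, Finsupp.single_eq_same]
        omega
      have h3 : (e - Finsupp.single (1 : Fin 2) m) 0 = e 0 := by
        rw [Finsupp.tsub_apply, Finsupp.single_eq_of_ne (by decide)]
        omega
      show toX h _ = _
      simp only [toX]
      rw [if_pos h2, h3]
    · rw [if_neg heq, one_mul]
      have h2 : (e - Finsupp.single (1 : Fin 2) m) 1 ≠ 0 := by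
        rw [Finsupp.tsub_apply, Finsupp.single_eq_same]
        omega
      show toX h _ = _
      simp only [toX]
      rw [if_neg h2]
  · rw [if_neg hle, if_neg]
    intro heq
    apply hle
    rw [Finsupp.single_le_iff]
    omega


/-- For every `k ≥ 1`, `∑_{n,r ≥ 0} t(n,k,r) (xⁿ/n!) yʳ = log⁽ᵏ⁾(x,y)
= (log⁽ᵏ⁾(x))ʸ = exp(y ⬝ log(log⁽ᵏ⁾(x)))` as formal power series in `ℚ[[x,y]]`. -/
theorem egf_t_eq_logXY (k : ℕ) (hk : 1 ≤ k) : tgen k = logXY k := by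
  funext e
  show (tnum (e 0) k (e 1) : ℚ) / (e 0).factorial
      = ∑ m ∈ Finset.range (e 0 + e 1 + 1), PowerSeries.coeff m (PowerSeries.exp ℚ)
          * MvPowerSeries.coeff e ((MvPowerSeries.X 1 * toX (_root_.logOf (logIter k))) ^ m)
  have hterm : ∀ m : ℕ,
      MvPowerSeries.coeff e ((MvPowerSeries.X 1 * toX (_root_.logOf (logIter k))) ^ m)
      = if e 1 = m then PowerSeries.coeff (e 0) ((_root_.logOf (logIter k)) ^ m) else 0 := by
    intro m
    rw [mul_pow, ← toX_pow, coeff_X1_pow_mul]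
  rw [eq_comm, Finset.sum_eq_single (e 1)]
  · rw [hterm, if_pos rfl, main_coeff k (e 1) (e 0), PowerSeries.coeff_exp]
    have h1 : (Nat.factorial (e 1) : ℚ) ≠ 0 := by positivity
    have h2 : (Nat.factorial (e 0) : ℚ) ≠ 0 := by positivity
    simp only [eq_ratCast, Rat.cast_div, Rat.cast_one, Rat.cast_natCast]
    field_simp
  · intro m _ hm
    rw [hterm, if_neg (fun h => hm h.symm), mul_zero]
  · intro hmem
    exact absurd (Finset.mem_range.2 (by omega)) hmem

end Aux
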